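/- Let A and B be braided monoidal categories and F : A → B a normal monoidal functor (its unit constraint φ₀ : I → FI is invertible). Suppose there is a monoidal natural isomorphism ψ between the composite ⊗ ∘ (F × F) and F ∘ ⊗ as monoidal functors A × A → B. Then the binary structure maps φ_{Y,Z} : FY ⊗ FZ → F(Y⊗Z) are all invertible, so F is strong monoidal. -/

import Mathlib

open CategoryTheory CategoryTheory.MonoidalCategory CategoryTheory.Functor

theorem stmt_15 {A B : Type*} [Category A] [Category B]
    [MonoidalCategory A] [MonoidalCategory B] [BraidedCategory A] [BraidedCategory B]
    (F : A ⥤ B) [F.LaxMonoidal] (normal : IsIso (LaxMonoidal.ε F))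
    (ψ : (F.prod F) ⋙ tensor B ≅ tensor A ⋙ F)
    (mon : NatTrans.IsMonoidal ψ.hom) :
    ∀ Y Z : A, IsIso (LaxMonoidal.μ F Y Z) := by
  open Functor.LaxMonoidal in
  intro Y Z
  -- `μ F X 𝟙` is invertible, from right unitality and normality
  have hμr : ∀ X : A, IsIso (μ F X (𝟙_ A)) := by
    intro X
    have h := (right_unitality F X).symm
    have : IsIso ((F.obj X ◁ ε F) ≫ μ F X (𝟙_ A) ≫ F.map (ρ_ X).hom) := by
      rw [h]; infer_instance
    have := IsIso.of_isIso_comp_left (F.obj X ◁ ε F)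
      (μ F X (𝟙_ A) ≫ F.map (ρ_ X).hom)
    exact IsIso.of_isIso_comp_right (μ F X (𝟙_ A)) (F.map (ρ_ X).hom)
  have hμl : ∀ X : A, IsIso (μ F (𝟙_ A) X) := by
    intro X
    have h := (left_unitality F X).symm
    have : IsIso ((ε F ▷ F.obj X) ≫ μ F (𝟙_ A) X ≫ F.map (λ_ X).hom) := by
      rw [h]; infer_instance
    have := IsIso.of_isIso_comp_left (ε F ▷ F.obj X)
      (μ F (𝟙_ A) X ≫ F.map (λ_ X).hom)
    exact IsIso.of_isIso_comp_right (μ F (𝟙_ A) X) (F.map (λ_ X).hom)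
  have htμA : ∀ X₁ X₂ Y₁ Y₂ : A, IsIso (tensorμ X₁ X₂ Y₁ Y₂) := fun X₁ X₂ Y₁ Y₂ =>
    ⟨tensorδ X₁ X₂ Y₁ Y₂, tensorμ_tensorδ X₁ X₂ Y₁ Y₂, tensorδ_tensorμ X₁ X₂ Y₁ Y₂⟩
  have htμB : ∀ X₁ X₂ Y₁ Y₂ : B, IsIso (tensorμ X₁ X₂ Y₁ Y₂) := fun X₁ X₂ Y₁ Y₂ =>
    ⟨tensorδ X₁ X₂ Y₁ Y₂, tensorμ_tensorδ X₁ X₂ Y₁ Y₂, tensorδ_tensorμ X₁ X₂ Y₁ Y₂⟩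
  -- invertibility of `μ F (Y ⊗ 𝟙) (𝟙 ⊗ Z)` from the monoidal nat. iso.
  have key := mon.tensor (Y, 𝟙_ A) (𝟙_ A, Z)
  simp only [comp_μ, tensor_μ, MonoidalCategory.tensor_map, prod_obj, prod_μ_fst, prod_μ_snd, comp_obj, tensor_obj,
    prodMonoidal_tensorObj] at key
  have h1 : IsIso ((ψ.hom.app (Y, 𝟙_ A) ⊗ₘ ψ.hom.app (𝟙_ A, Z)) ≫
      μ F (Y ⊗ 𝟙_ A) (𝟙_ A ⊗ Z) ≫ F.map (tensorμ Y (𝟙_ A) (𝟙_ A) Z)) := by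
    rw [← key]
    haveI := hμr Y
    haveI := hμl Z
    haveI := htμB (F.obj Y) (F.obj (𝟙_ A)) (F.obj (𝟙_ A)) (F.obj Z)
    haveI : IsIso (ψ.hom.app ((Y, 𝟙_ A) ⊗ (𝟙_ A, Z))) :=
      inferInstanceAs (IsIso (ψ.hom.app (Y ⊗ 𝟙_ A, 𝟙_ A ⊗ Z)))
    infer_instance
  haveI : IsIso (ψ.hom.app (Y, 𝟙_ A) ⊗ₘ ψ.hom.app (𝟙_ A, Z)) := by infer_instance
  haveI h2 : IsIso (μ F (Y ⊗ 𝟙_ A) (𝟙_ A ⊗ Z) ≫ F.map (tensorμ Y (𝟙_ A) (𝟙_ A) Z)) :=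
    IsIso.of_isIso_comp_left (ψ.hom.app (Y, 𝟙_ A) ⊗ₘ ψ.hom.app (𝟙_ A, Z)) _
  haveI : IsIso (F.map (tensorμ Y (𝟙_ A) (𝟙_ A) Z)) := by
    haveI := htμA Y (𝟙_ A) (𝟙_ A) Z; infer_instance
  haveI h3 : IsIso (μ F (Y ⊗ 𝟙_ A) (𝟙_ A ⊗ Z)) :=
    IsIso.of_isIso_comp_right _ (F.map (tensorμ Y (𝟙_ A) (𝟙_ A) Z))
  -- transfer along unitors using naturality of μ
  have hnat := μ_natural F (ρ_ Y).hom (λ_ Z).hom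
  have : IsIso (μ F (Y ⊗ 𝟙_ A) (𝟙_ A ⊗ Z) ≫ F.map ((ρ_ Y).hom ⊗ₘ (λ_ Z).hom)) := by
    infer_instance
  rw [← hnat] at this
  exact IsIso.of_isIso_comp_left (F.map (ρ_ Y).hom ⊗ₘ F.map (λ_ Z).hom) (μ F Y Z)
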